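/- Let E be a directed graph and K a field. The path algebra KE is left noetherian if and only if E^0 ∪ E^1 is finite and every cycle in E has no entries (i.e., no edge e with r(e) a vertex of the cycle and e not an edge of the cycle). -/

import Mathlib

/-- A directed graph: vertices, edges, source and range maps. -/
structure DGraph : Type 1 where
  V : Type
  Edge : Type
  s : Edge → V
  r : Edge → V

namespace DGraph

/-- A list of edges is composable if consecutive edges match up. -/
def IsComposable (G : DGraph) (l : List G.Edge) : Prop :=
  l.Chain' (fun e f => G.r e = G.s f)

/-- A path in `G`: either a trivial path at a vertex, or a nonempty composable list of edges. -/
def GPath (G : DGraph) : Type :=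
  G.V ⊕ {l : List G.Edge // l ≠ [] ∧ G.IsComposable l}

namespace GPath

variable {G : DGraph}

/-- The source of a path. -/
def src : GPath G → G.V
  | Sum.inl v => v
  | Sum.inr l => G.s (l.1.head l.2.1)

/-- The range of a path. -/
def rng : GPath G → G.V
  | Sum.inl v => v
  | Sum.inr l => G.r (l.1.getLast l.2.1)

/-- The length of a path. -/
def length : GPath G → ℕ
  | Sum.inl _ => 0
  | Sum.inr l => l.1.length

/-- The trivial path at a vertex. -/
def ofVertex (v : G.V) : GPath G := Sum.inl v

/-- The length-one path given by an edge. -/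
def ofEdge (e : G.Edge) : GPath G :=
  Sum.inr ⟨[e], by simp [IsComposable]; exact List.isChain_singleton _⟩

/-- Concatenation of composable paths. -/
def comp : (p q : GPath G) → p.rng = q.src → GPath G
  | Sum.inl _, q, _ => q
  | Sum.inr l, Sum.inl _, _ => Sum.inr l
  | Sum.inr l, Sum.inr m, h => Sum.inr ⟨l.1 ++ m.1, by
      refine ⟨by simp [l.2.1], l.2.2.append m.2.2 ?_⟩
      intro x hx y hy
      rw [List.getLast?_eq_some_getLast l.2.1] at hx
      rw [List.head?_eq_head m.2.1] at hy
      cases hx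
      cases hy
      exact h⟩

end GPath

end DGraph

open DGraph

/-- A realization of the path algebra of the graph `G` over the field `K`:
a `K`-algebra with a basis indexed by the paths of `G`, multiplying by concatenation. -/
structure PathAlgebraOn (K : Type) [Field K] (G : DGraph) (A : Type)
    [NonUnitalRing A] [Module K A] where
  basis : Module.Basis (GPath G) K A
  mul_comp : ∀ (p q : GPath G) (h : p.rng = q.src),
      basis p * basis q = basis (p.comp q h)
  mul_ncomp : ∀ p q : GPath G, p.rng ≠ q.src → basis p * basis q = 0

/-- A `K`-subspace of `A` which is a left ideal. -/
def IsLeftIdeal (K : Type) [Field K] (A : Type) [NonUnitalRing A] [Module K A]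
    (S : Submodule K A) : Prop :=
  ∀ a : A, ∀ x ∈ S, a * x ∈ S

/-- A `K`-subspace of `A` which is a right ideal. -/
def IsRightIdeal (K : Type) [Field K] (A : Type) [NonUnitalRing A] [Module K A]
    (S : Submodule K A) : Prop :=
  ∀ a : A, ∀ x ∈ S, x * a ∈ S

/-- The descending chain condition on left ideals. -/
def IsLeftArtinianAlg (K : Type) [Field K] (A : Type) [NonUnitalRing A] [Module K A] : Prop :=
  ∀ f : ℕ → Submodule K A, (∀ m, IsLeftIdeal K A (f m)) → (∀ m, f (m + 1) ≤ f m) →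
    ∃ m, ∀ l, m ≤ l → f l = f m

/-- The ascending chain condition on left ideals. -/
def IsLeftNoetherianAlg (K : Type) [Field K] (A : Type) [NonUnitalRing A] [Module K A] : Prop :=
  ∀ f : ℕ → Submodule K A, (∀ m, IsLeftIdeal K A (f m)) → (∀ m, f m ≤ f (m + 1)) →
    ∃ m, ∀ l, m ≤ l → f l = f m

/-- A minimal left ideal: nonzero, and containing no nonzero proper left subideal. -/
def IsMinimalLeftIdeal (K : Type) [Field K] (A : Type) [NonUnitalRing A] [Module K A]
    (S : Submodule K A) : Prop :=
  IsLeftIdeal K A S ∧ S ≠ ⊥ ∧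
    ∀ T : Submodule K A, IsLeftIdeal K A T → T ≤ S → T = ⊥ ∨ T = S

/-- A minimal right ideal. -/
def IsMinimalRightIdeal (K : Type) [Field K] (A : Type) [NonUnitalRing A] [Module K A]
    (S : Submodule K A) : Prop :=
  IsRightIdeal K A S ∧ S ≠ ⊥ ∧
    ∀ T : Submodule K A, IsRightIdeal K A T → T ≤ S → T = ⊥ ∨ T = S

/-- A cycle in `G`: a nonempty composable closed list of edges visiting pairwise
distinct vertices. -/
structure DGraph.IsCycleList (G : DGraph) (l : List G.Edge) : Prop where
  ne : l ≠ []
  comp : G.IsComposable l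
  closed : G.r (l.getLast ne) = G.s (l.head ne)
  nodup : (l.map G.s).Nodup

/-- A cycle has an exit: an edge starting at a vertex of the cycle which is not the
corresponding cycle edge. -/
def DGraph.HasExit (G : DGraph) (l : List G.Edge) : Prop :=
  ∃ e : G.Edge, ∃ f ∈ l, G.s e = G.s f ∧ e ≠ f

/-- A cycle has an entry: an edge ending at a vertex of the cycle which is not the
corresponding cycle edge. -/
def DGraph.HasEntry (G : DGraph) (l : List G.Edge) : Prop :=
  ∃ e : G.Edge, ∃ f ∈ l, G.r e = G.r f ∧ e ≠ f

/-- `G` is strongly connected: any two vertices are joined by a directed path. -/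
def DGraph.StronglyConnected (G : DGraph) : Prop :=
  ∀ u v : G.V, ∃ p : DGraph.GPath G, p.src = u ∧ p.rng = v


open DGraph GPath Polynomial

section Aux

variable {G : DGraph}

theorem rng_comp (p q : GPath G) (h : p.rng = q.src) : (p.comp q h).rng = q.rng := by
  match p, q with
  | Sum.inl v, q => rfl
  | Sum.inr l, Sum.inl w =>
      simpa [GPath.comp, GPath.rng, GPath.src] using h
  | Sum.inr l, Sum.inr m =>
      show G.r ((l.1 ++ m.1).getLast (by simp [l.2.1])) = G.r (m.1.getLast m.2.1)
      rw [List.getLast_append]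
      simp [m.2.1]

/-- From an ascending chain of suffix-closed path sets with strictly new elements,
deduce failure of the noetherian property. -/
theorem notNoeth (K : Type) [Field K] (A : Type) [NonUnitalRing A] [Module K A]
    [SMulCommClass K A A] [IsScalarTower K A A] (PA : PathAlgebraOn K G A)
    (P : ℕ → Set (GPath G))
    (h1 : ∀ m (p q : GPath G) (h : p.rng = q.src), q ∈ P m → p.comp q h ∈ P m)
    (h2 : ∀ m, P m ⊆ P (m + 1))
    (h3 : ∀ m, ∃ q ∈ P (m + 1), q ∉ P m) : ¬ IsLeftNoetherianAlg K A := by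
  intro hN
  set f : ℕ → Submodule K A := fun m => Submodule.span K (PA.basis '' P m) with hf
  have hli : ∀ m, IsLeftIdeal K A (f m) := by
    intro m a x hx
    have key : ∀ q ∈ P m, ∀ b : A, b * PA.basis q ∈ f m := by
      intro q hq b
      have hb : b ∈ Submodule.span K (Set.range PA.basis) := by
        rw [PA.basis.span_eq]; trivial
      induction hb using Submodule.span_induction with
      | mem y hy =>
          obtain ⟨p, rfl⟩ := hy
          by_cases h : p.rng = q.src
          · rw [PA.mul_comp p q h]
            exact Submodule.subset_span ⟨_, h1 m p q h hq, rfl⟩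
          · rw [PA.mul_ncomp p q h]; exact zero_mem _
      | zero => rw [zero_mul]; exact zero_mem _
      | add y z _ _ hy hz => rw [add_mul]; exact add_mem hy hz
      | smul c y _ hy => rw [smul_mul_assoc]; exact Submodule.smul_mem _ _ hy
    induction hx using Submodule.span_induction with
    | mem y hy => obtain ⟨q, hq, rfl⟩ := hy; exact key q hq a
    | zero => rw [mul_zero]; exact zero_mem _
    | add y z _ _ hy hz => rw [mul_add]; exact add_mem hy hz
    | smul c y _ hy => rw [mul_smul_comm]; exact Submodule.smul_mem _ _ hy
  obtain ⟨m, hm⟩ := hN f hli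
    (fun m => Submodule.span_mono (Set.image_mono (h2 m)))
  obtain ⟨q, hq1, hq0⟩ := h3 m
  have h1' : PA.basis q ∈ f (m + 1) := Submodule.subset_span ⟨q, hq1, rfl⟩
  rw [hm (m + 1) (Nat.le_succ m)] at h1'
  exact PA.basis.linearIndependent.notMem_span_image hq0 h1'

end Aux

section Entry

variable {G : DGraph}

/-- `k`-fold repetition of a list. -/
def crep {E : Type} (c : List E) : ℕ → List E
  | 0 => []
  | k + 1 => c ++ crep c k

theorem crep_add {E : Type} (c : List E) (a b : ℕ) :
    crep c (a + b) = crep c a ++ crep c b := by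
  induction a with
  | zero => simp [crep]
  | succ a ih => rw [Nat.succ_add]; simp [crep, ih]

theorem crep_length {E : Type} (c : List E) (k : ℕ) :
    (crep c k).length = k * c.length := by
  induction k with
  | zero => simp [crep]
  | succ k ih => simp [crep, ih, Nat.succ_mul]; ring

theorem crep_head? {E : Type} (c : List E) (hc : c ≠ []) (k : ℕ) :
    (crep c (k + 1)).head? = c.head? := by
  cases c with
  | nil => exact absurd rfl hc
  | cons a t => rfl

theorem crep_chain {E : Type} {R : E → E → Prop} {c : List E} (hc : List.Chain' R c)
    (hcc : ∀ x ∈ c.getLast?, ∀ y ∈ c.head?, R x y) (k : ℕ) :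
    List.Chain' R (crep c k) := by
  induction k with
  | zero => simp [crep, List.Chain']
  | succ k ih =>
      refine List.isChain_append.mpr ⟨hc, ih, ?_⟩
      intro x hx y hy
      cases k with
      | zero => simp [crep] at hy
      | succ k =>
          have hcne : c ≠ [] := fun h => by simp [h] at hx
          exact hcc x hx y (by rwa [crep_head? c hcne] at hy)

theorem notNoeth_of_entry (K : Type) [Field K] (A : Type) [NonUnitalRing A] [Module K A]
    [SMulCommClass K A A] [IsScalarTower K A A] (PA : PathAlgebraOn K G A)
    {l : List G.Edge} (hl : G.IsCycleList l) (he : G.HasEntry l) :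
    ¬ IsLeftNoetherianAlg K A := by
  classical
  obtain ⟨e, f₀, hf₀mem, hre, hne⟩ := he
  obtain ⟨l₁, l₂, rfl⟩ := List.append_of_mem hf₀mem
  rw [show l₁ ++ f₀ :: l₂ = (l₁ ++ [f₀]) ++ l₂ from by simp] at hl
  obtain ⟨c, hc⟩ : ∃ c, c = l₂ ++ (l₁ ++ [f₀]) := ⟨_, rfl⟩
  have hcne : c ≠ [] := by simp [hc]
  have hlne : (l₁ ++ [f₀]) ++ l₂ ≠ [] := hl.ne
  have hclosed2 : ∀ x ∈ ((l₁ ++ [f₀]) ++ l₂).getLast?, ∀ y ∈ ((l₁ ++ [f₀]) ++ l₂).head?,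
      G.r x = G.s y := by
    intro x hx y hy
    rw [List.getLast?_eq_getLast hlne, Option.mem_some_iff] at hx
    rw [List.head?_eq_head hlne, Option.mem_some_iff] at hy
    subst hx; subst hy
    exact hl.closed
  have hch := hl.comp
  obtain ⟨ch1, ch2, hjun⟩ := List.isChain_append.mp hch
  have hlast? : c.getLast? = some f₀ := by
    simp [hc, List.getLast?_append]
  have hccomp : List.Chain' (fun e f => G.r e = G.s f) c := by
    rw [hc]
    refine List.isChain_append.mpr ⟨ch2, ch1, ?_⟩
    intro x hx y hy
    refine hclosed2 x ?_ y ?_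
    · rw [List.getLast?_append, hx]; rfl
    · rw [List.head?_append]
      rw [Option.mem_def] at hy ⊢
      simp [hy]
  have hcc : ∀ x ∈ c.getLast?, ∀ y ∈ c.head?, G.r x = G.s y := by
    intro x hx y hy
    rw [hlast?, Option.mem_some_iff] at hx
    subst hx
    rcases h2 : l₂.head? with _ | z
    · have hl2 : l₂ = [] := by
        cases l₂ with
        | nil => rfl
        | cons a t => simp at h2
      subst hl2
      simp only [List.nil_append] at hc
      subst hc
      refine hclosed2 f₀ ?_ y ?_
      · rw [List.append_nil, List.getLast?_append]; rfl
      · rw [List.append_nil]; exact hy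
    · rw [hc, List.head?_append, h2, Option.mem_def] at hy
      have hy' : y = z := (Option.some_inj.mp hy).symm
      subst hy'
      exact hjun f₀ (by rw [List.getLast?_append]; rfl) y (by rw [h2]; rfl)
  have hre' : ∀ y ∈ c.head?, G.r e = G.s y := by
    intro y hy
    have h1 := hcc f₀ (by rw [hlast?]; rfl) y hy
    rw [hre]; exact h1
  -- the words
  obtain ⟨w, hw⟩ : ∃ w : ℕ → List G.Edge, w = fun k => e :: crep c k := ⟨_, rfl⟩
  have hwcomp : ∀ k, G.IsComposable (w k) := by
    intro k
    rw [hw]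
    refine List.isChain_cons.mpr ⟨?_, crep_chain hccomp hcc k⟩
    intro y hy
    cases k with
    | zero => simp [crep] at hy
    | succ k => exact hre' y (by rwa [crep_head? c hcne] at hy)
  have hwne : ∀ k, w k ≠ [] := fun k => by simp [hw]
  refine notNoeth K A PA (fun m =>
    {p | ∃ k < m, ∃ (L : List G.Edge) (hL : L ≠ [] ∧ G.IsComposable L),
      p = Sum.inr ⟨L, hL⟩ ∧ w k <:+ L}) ?_ ?_ ?_
  · rintro m p q h ⟨k, hk, L, hL, rfl, hsuf⟩
    cases p with
    | inl v => exact ⟨k, hk, L, hL, rfl, hsuf⟩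
    | inr x =>
        refine ⟨k, hk, x.1 ++ L, ⟨by simp [x.2.1], ?_⟩, rfl, hsuf.trans (List.suffix_append x.1 L)⟩
        refine List.IsChain.append x.2.2 hL.2 ?_
        intro a ha b hb
        rw [List.getLast?_eq_getLast x.2.1, Option.mem_some_iff] at ha
        rw [List.head?_eq_head hL.1, Option.mem_some_iff] at hb
        subst ha; subst hb
        exact h
  · rintro m p ⟨k, hk, L, hL, hp, hsuf⟩
    exact ⟨k, Nat.lt_succ_of_lt hk, L, hL, hp, hsuf⟩
  · intro m
    refine ⟨Sum.inr ⟨w m, ⟨hwne m, hwcomp m⟩⟩,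
      ⟨m, Nat.lt_succ_self m, w m, _, rfl, List.suffix_refl _⟩, ?_⟩
    rintro ⟨k, hk, L, hL, hq, hsuf⟩
    have hLw : L = w m := by
      have := Sum.inr.inj hq
      exact (congrArg Subtype.val this).symm
    subst hLw
    obtain ⟨t, ht⟩ := hsuf
    have hc0 : 0 < c.length := List.length_pos_iff.mpr hcne
    have htne : t ≠ [] := by
      rintro rfl
      rw [List.nil_append] at ht
      have hlen := congrArg List.length ht
      simp only [hw, List.length_cons, crep_length] at hlen
      have h1 : k * c.length = m * c.length := by omega
      have := Nat.eq_of_mul_eq_mul_right hc0 h1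
      omega
    obtain ⟨a, t'', rfl⟩ := List.exists_cons_of_ne_nil htne
    rw [hw] at ht
    simp only [List.cons_append] at ht
    have ht2 : t'' ++ e :: crep c k = crep c m := (List.cons.inj ht).2
    have hm' : m = (m - k - 1) + (k + 1) := by omega
    rw [hm', crep_add] at ht2
    have ht3 : (t'' ++ [e]) ++ crep c k = (crep c (m - k - 1) ++ c) ++ crep c k := by
      rw [List.append_assoc, List.append_assoc]
      simpa [crep] using ht2
    have ht4 : t'' ++ [e] = crep c (m - k - 1) ++ c := List.append_cancel_right ht3
    have h5 := congrArg List.getLast? ht4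
    rw [List.getLast?_append, List.getLast?_append, hlast?] at h5
    exact hne (Option.some_inj.mp h5)

end Entry

section Backward

variable {G : DGraph}

private theorem gidx {α : Type} (l : List α) {i j : ℕ} (h : i = j) (hi : i < l.length) :
    l[i]'hi = l[j]'(h ▸ hi) := by cases h; rfl

theorem cycle_drop (H : ∀ l : List G.Edge, G.IsCycleList l → ¬ G.HasEntry l)
    {l l' : List G.Edge} (hl : G.IsCycleList l) (hl' : G.IsCycleList l')
    (hv : G.s (l.head hl.ne) = G.s (l'.head hl'.ne)) (hlen : l.length ≤ l'.length) :
    ∀ k ≤ l.length, l.drop (l.length - k) = l'.drop (l'.length - k) := by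
  intro k
  induction k with
  | zero => intro _; rw [Nat.sub_zero, Nat.sub_zero, List.drop_length, List.drop_length]
  | succ k ih =>
      intro hk1
      have hk : k ≤ l.length := Nat.le_of_succ_le hk1
      have IH := ih hk
      have hn : 0 < l.length := List.length_pos_iff.mpr hl.ne
      have hn' : 0 < l'.length := List.length_pos_iff.mpr hl'.ne
      have hi1 : l.length - (k+1) < l.length := by omega
      have hi1' : l'.length - (k+1) < l'.length := by omega
      have hr : G.r (l[l.length - (k+1)]'hi1) = G.r (l'[l'.length - (k+1)]'hi1') := by
        cases k with
        | zero =>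
            have e1 : l.getLast hl.ne = l[l.length - (0+1)]'hi1 := by
              rw [List.getLast_eq_getElem]
            have e2 : l'.getLast hl'.ne = l'[l'.length - (0+1)]'hi1' := by
              rw [List.getLast_eq_getElem]
            rw [← e1, ← e2, hl.closed, hl'.closed]
            exact hv
        | succ j =>
            have hlt : l.length - (j+1) < l.length := by omega
            have hlt' : l'.length - (j+1) < l'.length := by omega
            have hhead : l[l.length - (j+1)]'hlt = l'[l'.length - (j+1)]'hlt' := by
              rw [List.drop_eq_getElem_cons hlt, List.drop_eq_getElem_cons hlt'] at IH
              exact (List.cons.inj IH).1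
            have c1 := List.isChain_iff_getElem.mp hl.comp (l.length - (j+1+1)) (by omega)
            have c2 := List.isChain_iff_getElem.mp hl'.comp (l'.length - (j+1+1)) (by omega)
            rw [c1, c2]
            rw [gidx l (show l.length - (j+1+1) + 1 = l.length - (j+1) from by omega),
              gidx l' (show l'.length - (j+1+1) + 1 = l'.length - (j+1) from by omega)]
            rw [hhead]
      have hef : l'[l'.length - (k+1)]'hi1' = l[l.length - (k+1)]'hi1 := by
        by_contra hne
        exact H l hl ⟨l'[l'.length - (k+1)]'hi1', l[l.length - (k+1)]'hi1,
          List.getElem_mem hi1, hr.symm, hne⟩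
      rw [List.drop_eq_getElem_cons hi1, List.drop_eq_getElem_cons hi1']
      rw [show l.length - (k+1) + 1 = l.length - k from by omega,
        show l'.length - (k+1) + 1 = l'.length - k from by omega]
      rw [hef, IH]

theorem cycle_eq_of_le (H : ∀ l : List G.Edge, G.IsCycleList l → ¬ G.HasEntry l)
    {l l' : List G.Edge} (hl : G.IsCycleList l) (hl' : G.IsCycleList l')
    (hv : G.s (l.head hl.ne) = G.s (l'.head hl'.ne)) (hlen : l.length ≤ l'.length) :
    l = l' := by
  have hd := cycle_drop H hl hl' hv hlen l.length le_rfl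
  rw [Nat.sub_self, List.drop_zero] at hd
  -- hd : l = l'.drop (l'.length - l.length)
  rcases Nat.eq_or_lt_of_le hlen with heq | hlt
  · rw [hd, heq, Nat.sub_self, List.drop_zero]
  · exfalso
    have hn : 0 < l.length := List.length_pos_iff.mpr hl.ne
    have hidx : l'.length - l.length < l'.length := by omega
    have h0 : l[0]'hn = l'[l'.length - l.length]'hidx := by
      have h1 := List.getElem_of_eq hd hn
      rw [h1, List.getElem_drop]
      exact gidx l' (by omega) _
    have hs : G.s (l'[0]'(by omega)) = G.s (l'[l'.length - l.length]'hidx) := by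
      rw [← h0]
      rw [List.head_eq_getElem, List.head_eq_getElem] at hv
      exact hv.symm
    have hmap : (l'.map G.s)[0]'(by simp; omega) = (l'.map G.s)[l'.length - l.length]'(by simp; omega) := by
      rw [List.getElem_map, List.getElem_map]
      exact hs
    have := (hl'.nodup.getElem_inj_iff).mp hmap
    omega

theorem cycle_unique (H : ∀ l : List G.Edge, G.IsCycleList l → ¬ G.HasEntry l)
    {l l' : List G.Edge} (hl : G.IsCycleList l) (hl' : G.IsCycleList l')
    (hv : G.s (l.head hl.ne) = G.s (l'.head hl'.ne)) : l = l' := by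
  rcases le_total l.length l'.length with h | h
  · exact cycle_eq_of_le H hl hl' hv h
  · exact (cycle_eq_of_le H hl' hl hv.symm h).symm

end Backward

section Decomp

variable {G : DGraph}

set_option maxHeartbeats 1000000 in
theorem long_starts_with_cycle
    (H : ∀ l : List G.Edge, G.IsCycleList l → ¬ G.HasEntry l)
    [Fintype G.V] {m : List G.Edge} (hm : G.IsComposable m)
    (hlen : Fintype.card G.V < m.length) :
    ∃ (c m' : List G.Edge), m = c ++ m' ∧ G.IsCycleList c := by
  classical
  have hmlen : ∀ i : Fin (Fintype.card G.V + 1), i.1 < m.length :=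
    fun i => lt_of_lt_of_le i.isLt hlen
  obtain ⟨a, b, hab, heq⟩ := Fintype.exists_ne_map_eq_of_card_lt
    (fun i : Fin (Fintype.card G.V + 1) => G.s (m[i.1]'(hmlen i)))
    (by simp)
  set Q : ℕ → Prop := fun d => ∃ i j : ℕ, ∃ (h : i < j ∧ j < m.length),
    j - i = d ∧ G.s (m[i]'(h.1.trans h.2)) = G.s (m[j]'h.2) with hQdef
  have hQ : ∃ d, Q d := by
    rcases lt_or_gt_of_ne hab with h | h
    · exact ⟨b.1 - a.1, a.1, b.1, ⟨h, hmlen b⟩, rfl, heq⟩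
    · exact ⟨a.1 - b.1, b.1, a.1, ⟨h, hmlen a⟩, rfl, heq.symm⟩
  obtain ⟨d₀, d0spec, hmin⟩ : ∃ d, Q d ∧ ∀ e, e < d → ¬ Q e :=
    ⟨Nat.find hQ, Nat.find_spec hQ, fun e he => Nat.find_min hQ he⟩
  have d₀pos : 0 < d₀ := by
    obtain ⟨i, j, h, hd, _⟩ := d0spec
    omega
  -- segments of difference d₀ are cycles
  have seg : ∀ i j (h : i < j ∧ j < m.length), j - i = d₀ →
      G.s (m[i]'(h.1.trans h.2)) = G.s (m[j]'h.2) →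
      G.IsCycleList ((m.drop i).take d₀) := by
    intro i j h hd hs
    have hij : i + d₀ = j := by omega
    have hlen1 : ((m.drop i).take d₀).length = d₀ := by
      rw [List.length_take, List.length_drop]; omega
    have hne : (m.drop i).take d₀ ≠ [] := by
      intro h0
      rw [h0] at hlen1
      simp at hlen1
      omega
    have hget : ∀ (a : ℕ) (ha : a < d₀), ((m.drop i).take d₀)[a]'(by omega) = m[i+a]'(by omega) := by
      intro a ha
      rw [List.getElem_take, List.getElem_drop]
    refine ⟨hne, ?_, ?_, ?_⟩
    · exact hm.infix ((List.take_prefix _ _).isInfix.trans (List.drop_suffix i m).isInfix)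
    · -- closed
      have e1 : ((m.drop i).take d₀).getLast hne = m[j-1]'(by omega) := by
        rw [List.getLast_eq_getElem]
        rw [gidx _ (show ((m.drop i).take d₀).length - 1 = d₀ - 1 from by omega)]
        rw [hget (d₀ - 1) (by omega)]
        exact gidx _ (by omega) _
      have e2 : ((m.drop i).take d₀).head hne = m[i]'(h.1.trans h.2) := by
        rw [List.head_eq_getElem]
        rw [hget 0 d₀pos]
        exact gidx m (by omega) _
      rw [e1, e2]
      have c2 := List.isChain_iff_getElem.mp hm (j-1) (by omega)
      rw [c2, gidx m (show j - 1 + 1 = j from by omega)]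
      exact hs.symm
    · -- nodup
      rw [List.nodup_iff_injective_get]
      rintro ⟨x, hx⟩ ⟨y, hy⟩ hxy
      simp only [List.get_eq_getElem, List.getElem_map] at hxy
      have hx' : x < d₀ := by rw [List.length_map, hlen1] at hx; exact hx
      have hy' : y < d₀ := by rw [List.length_map, hlen1] at hy; exact hy
      rw [hget x hx', hget y hy'] at hxy
      rcases Nat.lt_trichotomy x y with hlt | heq' | hlt
      · exfalso
        refine hmin (y - x) (by omega) ⟨i+x, i+y, ⟨by omega, by omega⟩, by omega, hxy⟩
      · exact Fin.ext heq'
      · exfalso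
        refine hmin (x - y) (by omega) ⟨i+y, i+x, ⟨by omega, by omega⟩, by omega, hxy.symm⟩
  -- main downward induction
  have main : ∀ i j (h : i < j ∧ j < m.length), j - i = d₀ →
      G.s (m[i]'(h.1.trans h.2)) = G.s (m[j]'h.2) →
      ∃ (c m' : List G.Edge), m = c ++ m' ∧ G.IsCycleList c := by
    intro i
    induction i with
    | zero =>
        intro j h hd hs
        refine ⟨m.take d₀, m.drop d₀, (List.take_append_drop d₀ m).symm, ?_⟩
        have := seg 0 j h hd hs
        rw [List.drop_zero] at this
        exact this
    | succ i ih =>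
        intro j h hd hs
        have hcyc := seg (i+1) j h hd hs
        have hlen1 : ((m.drop (i+1)).take d₀).length = d₀ := by
          rw [List.length_take, List.length_drop]; omega
        have hmem : m[j-1]'(by omega) ∈ (m.drop (i+1)).take d₀ := by
          have e1 : ((m.drop (i+1)).take d₀)[d₀-1]'(by omega) = m[(i+1)+(d₀-1)]'(by omega) := by
            rw [List.getElem_take, List.getElem_drop]
          rw [gidx m (show (i+1)+(d₀-1) = j - 1 from by omega)] at e1
          exact e1 ▸ List.getElem_mem _
        have hrr : G.r (m[i]'(by omega)) = G.r (m[j-1]'(by omega)) := by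
          have c1 := List.isChain_iff_getElem.mp hm i (by omega)
          have c2 := List.isChain_iff_getElem.mp hm (j-1) (by omega)
          rw [c1, c2, gidx m (show j - 1 + 1 = j from by omega)]
          rw [← hs]
        have hef : m[i]'(by omega) = m[j-1]'(by omega) := by
          by_contra hne
          exact H _ hcyc ⟨m[i]'(by omega), m[j-1]'(by omega), hmem, hrr, hne⟩
        exact ih (j-1) ⟨by omega, by omega⟩ (by omega) (congrArg G.s hef)
  obtain ⟨i, j, h, hd, hs⟩ := d0spec
  exact main i j h hd hs

end Decomp

/-- The last edge of a path, if any. -/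
def lastE {G : DGraph} : GPath G → Option G.Edge
  | Sum.inl _ => none
  | Sum.inr x => x.1.getLast?

/-- `KE` is left noetherian iff `E⁰ ∪ E¹` is finite and no cycle of `E`
has an entry. -/
theorem stmt17 (K : Type) [Field K] (G : DGraph)
    (A : Type) [NonUnitalRing A] [Module K A] [SMulCommClass K A A] [IsScalarTower K A A]
    (PA : PathAlgebraOn K G A) :
    IsLeftNoetherianAlg K A ↔
      (Finite G.V ∧ Finite G.Edge ∧
        ∀ l : List G.Edge, G.IsCycleList l → ¬ G.HasEntry l) := by
  classical
  constructor
  · intro hN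
    refine ⟨?_, ?_, ?_⟩
    · by_contra hV
      rw [not_finite_iff_infinite] at hV
      set g := (Infinite.natEmbedding G.V) with hg
      refine notNoeth K A PA (fun m => {p | ∃ k < m, p.rng = g k}) ?_ ?_ ?_ hN
      · rintro m p q h ⟨k, hk, hr⟩
        exact ⟨k, hk, (rng_comp p q h).trans hr⟩
      · rintro m p ⟨k, hk, hr⟩
        exact ⟨k, Nat.lt_succ_of_lt hk, hr⟩
      · intro m
        refine ⟨GPath.ofVertex (g m), ⟨m, Nat.lt_succ_self m, rfl⟩, ?_⟩
        rintro ⟨k, hk, hr⟩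
        have : k = m := g.injective hr.symm
        omega
    · by_contra hE
      rw [not_finite_iff_infinite] at hE
      set g := (Infinite.natEmbedding G.Edge) with hg
      refine notNoeth K A PA (fun m => {p | ∃ k < m, lastE p = some (g k)}) ?_ ?_ ?_ hN
      · rintro m p q h ⟨k, hk, hr⟩
        refine ⟨k, hk, ?_⟩
        cases q with
        | inl w => simp [lastE] at hr
        | inr y =>
            cases p with
            | inl v => exact hr
            | inr z =>
                show (z.1 ++ y.1).getLast? = some (g k)
                rw [List.getLast?_append]
                rw [show y.1.getLast? = some (g k) from hr]
                rfl
      · rintro m p ⟨k, hk, hr⟩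
        exact ⟨k, Nat.lt_succ_of_lt hk, hr⟩
      · intro m
        refine ⟨GPath.ofEdge (g m), ⟨m, Nat.lt_succ_self m, rfl⟩, ?_⟩
        rintro ⟨k, hk, hr⟩
        have hr' : some (g m) = some (g k) := hr
        have : k = m := g.injective (Option.some_inj.mp hr').symm
        omega
    · intro l hl he
      exact notNoeth_of_entry K A PA hl he hN
  · rintro ⟨hV, hE, hNE⟩
    intro f hf hmono
    letI : Fintype G.V := Fintype.ofFinite _
    letI : Fintype G.Edge := Fintype.ofFinite _
    have hCfin : {l : List G.Edge | G.IsCycleList l}.Finite := by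
      refine (List.finite_length_le G.Edge (Fintype.card G.Edge)).subset ?_
      intro l hl
      exact (List.Nodup.of_map G.s hl.nodup).length_le_card
    set x : A := ∑ l ∈ hCfin.toFinset,
      (if hl : G.IsCycleList l then PA.basis (Sum.inr ⟨l, hl.ne, hl.comp⟩) else 0) with hx
    set L : Module.End K A := LinearMap.mulLeft K x with hLdef
    letI MX : Module (Polynomial K) A := Module.compHom A (Polynomial.aeval L).toRingHom
    have hsmul : ∀ (σ : Polynomial K) (a : A),
        σ • a = (Polynomial.aeval L σ : Module.End K A) a := fun _ _ => rfl
    have hXs : ∀ a : A, (Polynomial.X : Polynomial K) • a = x * a := by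
      intro a; rw [hsmul, Polynomial.aeval_X]; rfl
    have hCs : ∀ (k : K) (a : A), (Polynomial.C k : Polynomial K) • a = k • a := by
      intro k a
      rw [hsmul, Polynomial.aeval_C]
      rfl
    have hxmul : ∀ (c : List G.Edge) (hc : G.IsCycleList c) (p' : GPath G)
        (h : GPath.rng (Sum.inr ⟨c, hc.ne, hc.comp⟩ : GPath G) = p'.src),
        x * PA.basis p'
          = PA.basis (GPath.comp (Sum.inr ⟨c, hc.ne, hc.comp⟩ : GPath G) p' h) := by
      intro c hc p' h
      rw [hx, Finset.sum_mul, Finset.sum_eq_single c]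
      · rw [dif_pos hc]; exact PA.mul_comp _ _ h
      · intro l hlT hlne
        rw [Set.Finite.mem_toFinset] at hlT
        have hl' : G.IsCycleList l := hlT
        rw [dif_pos hl']
        refine PA.mul_ncomp _ _ ?_
        intro hbad
        apply hlne
        refine cycle_unique hNE hl' hc ?_
        have h1 : G.s (l.head hl'.ne) = p'.src := by rw [← hl'.closed]; exact hbad
        have h2 : G.s (c.head hc.ne) = p'.src := by rw [← hc.closed]; exact h
        rw [h1, h2]
      · intro hc'
        exact absurd ((Set.Finite.mem_toFinset hCfin).mpr hc) hc'
    have hPfin : {p : GPath G | p.length ≤ Fintype.card G.V}.Finite := by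
      have h1 : {l : List G.Edge | l.length ≤ Fintype.card G.V}.Finite :=
        List.finite_length_le _ _
      have h2 : (Subtype.val ⁻¹'
          {l : List G.Edge | l.length ≤ Fintype.card G.V} :
          Set {l : List G.Edge // l ≠ [] ∧ G.IsComposable l}).Finite :=
        h1.preimage (Subtype.val_injective.injOn)
      refine ((Set.finite_univ.image (Sum.inl : G.V → GPath G)).union
        (h2.image (Sum.inr : _ → GPath G))).subset ?_
      rintro (v | y) hp
      · exact Or.inl ⟨v, trivial, rfl⟩
      · exact Or.inr ⟨y, hp, rfl⟩
    set Gen : Set A := PA.basis '' {p : GPath G | p.length ≤ Fintype.card G.V} with hGen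
    have hspan : ∀ (n : ℕ) (p : GPath G), p.length = n →
        PA.basis p ∈ Submodule.span (Polynomial K) Gen := by
      intro n
      induction n using Nat.strong_induction_on with
      | _ n ih =>
        intro p hn
        by_cases hle : p.length ≤ Fintype.card G.V
        · exact Submodule.subset_span ⟨p, hle, rfl⟩
        · push_neg at hle
          match p, hn, hle with
          | Sum.inl v, hn, hle => exact (Nat.not_lt_zero _ hle).elim
          | Sum.inr y, hn, hle =>
            have hylen : Fintype.card G.V < y.1.length := hle
            obtain ⟨c, m', hm', hc⟩ := long_starts_with_cycle hNE y.2.2 hylen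
            have hyn : y.1.length = n := hn
            have hcpos : 0 < c.length := List.length_pos_iff.mpr hc.ne
            by_cases hm'e : m' = []
            · subst hm'e
              rw [List.append_nil] at hm'
              have h : GPath.rng (Sum.inr ⟨c, hc.ne, hc.comp⟩ : GPath G)
                  = GPath.src (Sum.inl (G.s (c.head hc.ne)) : GPath G) := hc.closed
              have peq : GPath.comp (Sum.inr ⟨c, hc.ne, hc.comp⟩ : GPath G)
                  (Sum.inl (G.s (c.head hc.ne))) h = Sum.inr y := by
                show Sum.inr _ = Sum.inr y
                congr 1
                exact Subtype.ext hm'.symm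
              have hb : PA.basis (Sum.inr y : GPath G)
                  = (Polynomial.X : Polynomial K)
                    • PA.basis (Sum.inl (G.s (c.head hc.ne)) : GPath G) := by
                rw [hXs, hxmul c hc _ h, peq]
              rw [hb]
              exact Submodule.smul_mem _ _
                (Submodule.subset_span ⟨_, Nat.zero_le _, rfl⟩)
            · have hsplit := y.2.2
              rw [hm'] at hsplit
              obtain ⟨ch1, ch2, hj⟩ := List.isChain_append.mp hsplit
              have hjun : G.r (c.getLast hc.ne) = G.s (m'.head hm'e) := by
                refine hj _ ?_ _ ?_
                · rw [List.getLast?_eq_getLast hc.ne]; rfl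
                · rw [List.head?_eq_head hm'e]; rfl
              have h : GPath.rng (Sum.inr ⟨c, hc.ne, hc.comp⟩ : GPath G)
                  = GPath.src (Sum.inr ⟨m', hm'e, ch2⟩ : GPath G) := hjun
              have peq : GPath.comp (Sum.inr ⟨c, hc.ne, hc.comp⟩ : GPath G)
                  (Sum.inr ⟨m', hm'e, ch2⟩) h = Sum.inr y := by
                show Sum.inr _ = Sum.inr y
                congr 1
                exact Subtype.ext hm'.symm
              have hb : PA.basis (Sum.inr y : GPath G)
                  = (Polynomial.X : Polynomial K)
                    • PA.basis (Sum.inr ⟨m', hm'e, ch2⟩ : GPath G) := by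
                rw [hXs, hxmul c hc _ h, peq]
              rw [hb]
              refine Submodule.smul_mem _ _ ?_
              refine ih m'.length ?_ _ rfl
              have hlsum : y.1.length = c.length + m'.length := by rw [hm']; simp
              omega
    haveI : Module.Finite (Polynomial K) A := by
      refine ⟨⟨(hPfin.image PA.basis).toFinset, ?_⟩⟩
      rw [Set.Finite.coe_toFinset]
      rw [Submodule.eq_top_iff']
      intro a
      have ha : a ∈ Submodule.span K (Set.range PA.basis) := by
        rw [PA.basis.span_eq]; trivial
      induction ha using Submodule.span_induction with
      | mem y hy => obtain ⟨p, rfl⟩ := hy; exact hspan p.length p rfl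
      | zero => exact zero_mem _
      | add y z _ _ hy hz => exact add_mem hy hz
      | smul k y _ hy =>
          rw [← hCs k y]
          exact Submodule.smul_mem _ _ hy
    haveI hNoeth : IsNoetherian (Polynomial K) A :=
      isNoetherian_of_isNoetherianRing_of_finite (Polynomial K) A
    have hFsm : ∀ m (σ : Polynomial K), ∀ a ∈ f m, σ • a ∈ f m := by
      intro m σ
      induction σ using Polynomial.induction_on with
      | C k => intro a ha; rw [hCs]; exact Submodule.smul_mem _ _ ha
      | add p q hp hq =>
          intro a ha
          rw [hsmul, map_add, LinearMap.add_apply, ← hsmul p a, ← hsmul q a]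
          exact add_mem (hp a ha) (hq a ha)
      | monomial n k hk =>
          intro a ha
          have hstep : (Polynomial.C k * Polynomial.X ^ (n+1) : Polynomial K) • a
              = (Polynomial.C k * Polynomial.X ^ n : Polynomial K)
                • ((Polynomial.X : Polynomial K) • a) := by
            rw [← mul_smul, pow_succ, mul_assoc]
          rw [hstep]
          refine hk _ ?_
          rw [hXs]
          exact hf m x a ha
    set F : ℕ → Submodule (Polynomial K) A := fun m =>
      { carrier := f m
        add_mem' := fun h1 h2 => (f m).add_mem h1 h2
        zero_mem' := (f m).zero_mem
        smul_mem' := fun σ a ha => hFsm m σ a ha } with hF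
    have hFmono : Monotone F := monotone_nat_of_le_succ (fun n a ha => hmono n ha)
    obtain ⟨n, hn⟩ := monotone_stabilizes_iff_noetherian.mpr hNoeth ⟨F, hFmono⟩
    refine ⟨n, fun l hl => ?_⟩
    have hFeq : F n = F l := hn l hl
    have hset : (F n : Set A) = (F l : Set A) := congrArg SetLike.coe hFeq
    exact SetLike.ext' (hset.symm)
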